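/- Monotone degradation of Bayes risk in the threshold (monotonicity of the Bayes risk error divergence in its second argument for the Gaussian model): fix σ > 0 and p ∈ (0,1), and let η*(p) = 1/2 + σ²·ln(p/(1−p)). If η1 ≤ η2 ≤ η*(p) then R(p, η2) ≤ R(p, η1), and if η*(p) ≤ η1 ≤ η2 then R(p, η1) ≤ R(p, η2). -/

import Mathlib

open MeasureTheory ProbabilityTheory

private lemma gauss_pdf_key (σ : ℝ) (hσ : 0 < σ) (p x : ℝ) (hp0 : 0 < p) (hp1 : p < 1)
    (hx : x ≤ 1 / 2 + σ ^ 2 * Real.log (p / (1 - p))) :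
    (1 - p) * gaussianPDFReal 1 ⟨σ ^ 2, sq_nonneg σ⟩ x
      ≤ p * gaussianPDFReal 0 ⟨σ ^ 2, sq_nonneg σ⟩ x := by
  have hp1' : (0:ℝ) < 1 - p := by linarith
  have hs : (0:ℝ) < σ ^ 2 := by positivity
  simp only [gaussianPDFReal, NNReal.coe_mk]
  have hc : (0:ℝ) ≤ (Real.sqrt (2 * Real.pi * σ ^ 2))⁻¹ := by positivity
  rw [mul_left_comm, mul_left_comm p]
  refine mul_le_mul_of_nonneg_left ?_ hc
  have hA : (1 - p) * Real.exp (-(x - 1) ^ 2 / (2 * σ ^ 2))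
      = Real.exp (Real.log (1 - p) + -(x - 1) ^ 2 / (2 * σ ^ 2)) := by
    rw [Real.exp_add, Real.exp_log hp1']
  have hB : p * Real.exp (-(x - 0) ^ 2 / (2 * σ ^ 2))
      = Real.exp (Real.log p + -(x - 0) ^ 2 / (2 * σ ^ 2)) := by
    rw [Real.exp_add, Real.exp_log hp0]
  show (1 - p) * Real.exp (-(x - 1) ^ 2 / (2 * σ ^ 2)) ≤ p * Real.exp (-(x - 0) ^ 2 / (2 * σ ^ 2))
  rw [hA, hB, Real.exp_le_exp]
  rw [Real.log_div hp0.ne' hp1'.ne'] at hx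
  have h2 : 2 * x - 1 ≤ 2 * σ ^ 2 * (Real.log p - Real.log (1 - p)) := by nlinarith
  have hdiv : (2 * x - 1) / (2 * σ ^ 2) ≤ Real.log p - Real.log (1 - p) := by
    rw [div_le_iff₀ (by positivity)]; linarith
  have e1 : (x - 0) ^ 2 / (2 * σ ^ 2) - (x - 1) ^ 2 / (2 * σ ^ 2)
      = (2 * x - 1) / (2 * σ ^ 2) := by
    field_simp; ring
  rw [neg_div, neg_div]
  linarith

private lemma gauss_pdf_key' (σ : ℝ) (hσ : 0 < σ) (p x : ℝ) (hp0 : 0 < p) (hp1 : p < 1)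
    (hx : 1 / 2 + σ ^ 2 * Real.log (p / (1 - p)) ≤ x) :
    p * gaussianPDFReal 0 ⟨σ ^ 2, sq_nonneg σ⟩ x
      ≤ (1 - p) * gaussianPDFReal 1 ⟨σ ^ 2, sq_nonneg σ⟩ x := by
  have hp1' : (0:ℝ) < 1 - p := by linarith
  have hs : (0:ℝ) < σ ^ 2 := by positivity
  simp only [gaussianPDFReal, NNReal.coe_mk]
  have hc : (0:ℝ) ≤ (Real.sqrt (2 * Real.pi * σ ^ 2))⁻¹ := by positivity
  rw [mul_left_comm, mul_left_comm (1 - p)]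
  refine mul_le_mul_of_nonneg_left ?_ hc
  have hA : (1 - p) * Real.exp (-(x - 1) ^ 2 / (2 * σ ^ 2))
      = Real.exp (Real.log (1 - p) + -(x - 1) ^ 2 / (2 * σ ^ 2)) := by
    rw [Real.exp_add, Real.exp_log hp1']
  have hB : p * Real.exp (-(x - 0) ^ 2 / (2 * σ ^ 2))
      = Real.exp (Real.log p + -(x - 0) ^ 2 / (2 * σ ^ 2)) := by
    rw [Real.exp_add, Real.exp_log hp0]
  show p * Real.exp (-(x - 0) ^ 2 / (2 * σ ^ 2)) ≤ (1 - p) * Real.exp (-(x - 1) ^ 2 / (2 * σ ^ 2))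
  rw [hA, hB, Real.exp_le_exp]
  rw [Real.log_div hp0.ne' hp1'.ne'] at hx
  have h2 : 2 * σ ^ 2 * (Real.log p - Real.log (1 - p)) ≤ 2 * x - 1 := by nlinarith
  have hdiv : Real.log p - Real.log (1 - p) ≤ (2 * x - 1) / (2 * σ ^ 2) := by
    rw [le_div_iff₀ (by positivity)]; linarith
  have e1 : (x - 0) ^ 2 / (2 * σ ^ 2) - (x - 1) ^ 2 / (2 * σ ^ 2)
      = (2 * x - 1) / (2 * σ ^ 2) := by
    field_simp; ring
  rw [neg_div, neg_div]
  linarith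

/-- Monotone degradation of Bayes risk in the threshold for the Gaussian model:
the Bayes risk is nonincreasing in `η` below the matched threshold `η*(p)` and
nondecreasing above it. -/
theorem gaussian_bayes_risk_monotone_threshold
    (σ : ℝ) (hσ : 0 < σ)
    (μ0 μ1 : Measure ℝ)
    (hμ0 : μ0 = gaussianReal 0 ⟨σ ^ 2, sq_nonneg σ⟩)
    (hμ1 : μ1 = gaussianReal 1 ⟨σ ^ 2, sq_nonneg σ⟩)
    (pI pII : ℝ → ℝ)
    (hpI : ∀ η : ℝ, pI η = (μ0 {y : ℝ | η ≤ y}).toReal)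
    (hpII : ∀ η : ℝ, pII η = (μ1 {y : ℝ | y < η}).toReal)
    (R : ℝ → ℝ → ℝ)
    (hR : ∀ p η : ℝ, R p η = p * pI η + (1 - p) * pII η)
    (ηstar : ℝ → ℝ)
    (hηstar : ∀ p : ℝ, ηstar p = 1 / 2 + σ ^ 2 * Real.log (p / (1 - p)))
    (p : ℝ) (hp : p ∈ Set.Ioo (0 : ℝ) 1) :
    (∀ η1 η2 : ℝ, η1 ≤ η2 → η2 ≤ ηstar p → R p η2 ≤ R p η1) ∧
    (∀ η1 η2 : ℝ, ηstar p ≤ η1 → η1 ≤ η2 → R p η1 ≤ R p η2) := by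
  obtain ⟨hp0, hp1⟩ := hp
  set v : NNReal := ⟨σ ^ 2, sq_nonneg σ⟩ with hv
  have hvne : v ≠ 0 := by
    intro h
    have : σ ^ 2 = 0 := congrArg NNReal.toReal h
    nlinarith
  -- difference formula
  have hdisj : ∀ a b : ℝ, Disjoint (Set.Ico a b) (Set.Ici b) :=
    fun a b => Set.disjoint_left.mpr fun x hx hx' => absurd hx' (not_le.mpr hx.2)
  have hdisj' : ∀ a b : ℝ, Disjoint (Set.Iio a) (Set.Ico a b) :=
    fun a b => Set.disjoint_left.mpr fun x hx hx' => absurd hx'.1 (not_le.mpr hx)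
  have hIco : ∀ (m : ℝ) (a b : ℝ),
      (gaussianReal m v (Set.Ico a b)).toReal = ∫ x in Set.Ico a b, gaussianPDFReal m v x := by
    intro m a b
    rw [gaussianReal_apply_eq_integral m hvne, ENNReal.toReal_ofReal]
    exact setIntegral_nonneg measurableSet_Ico fun x _ => gaussianPDFReal_nonneg _ _ _
  have hpIdiff : ∀ a b : ℝ, a ≤ b →
      pI a = pI b + (gaussianReal 0 v (Set.Ico a b)).toReal := by
    intro a b hab
    rw [hpI, hpI]
    have h1 : {y : ℝ | a ≤ y} = Set.Ici a := rfl
    have h2 : {y : ℝ | b ≤ y} = Set.Ici b := rfl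
    rw [h1, h2, hμ0, ← Set.Ico_union_Ici_eq_Ici hab,
      measure_union (hdisj a b) measurableSet_Ici,
      ENNReal.toReal_add (measure_ne_top _ _) (measure_ne_top _ _)]
    ring
  have hpIIdiff : ∀ a b : ℝ, a ≤ b →
      pII b = pII a + (gaussianReal 1 v (Set.Ico a b)).toReal := by
    intro a b hab
    rw [hpII, hpII]
    have h1 : {y : ℝ | y < a} = Set.Iio a := rfl
    have h2 : {y : ℝ | y < b} = Set.Iio b := rfl
    rw [h1, h2, hμ1, ← Set.Iio_union_Ico_eq_Iio hab,
      measure_union (hdisj' a b) measurableSet_Ico,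
      ENNReal.toReal_add (measure_ne_top _ _) (measure_ne_top _ _)]
  have hRdiff : ∀ a b : ℝ, a ≤ b →
      R p b - R p a = (1 - p) * (∫ x in Set.Ico a b, gaussianPDFReal 1 v x)
        - p * ∫ x in Set.Ico a b, gaussianPDFReal 0 v x := by
    intro a b hab
    rw [hR, hR, hpIdiff a b hab, hpIIdiff a b hab, ← hIco 0 a b, ← hIco 1 a b]
    ring
  have hint : ∀ (m : ℝ) (a b : ℝ),
      IntegrableOn (gaussianPDFReal m v) (Set.Ico a b) volume :=
    fun m a b => (integrable_gaussianPDFReal m v).integrableOn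
  constructor
  · intro a b hab hb
    have key : ∀ x ∈ Set.Ico a b,
        (1 - p) * gaussianPDFReal 1 v x ≤ p * gaussianPDFReal 0 v x := by
      intro x hx
      refine gauss_pdf_key σ hσ p x hp0 hp1 ?_
      have := hηstar p
      have hxb : x ≤ b := le_of_lt hx.2
      linarith
    have hmono : (∫ x in Set.Ico a b, (1 - p) * gaussianPDFReal 1 v x)
        ≤ ∫ x in Set.Ico a b, p * gaussianPDFReal 0 v x :=
      setIntegral_mono_on ((hint 1 a b).const_mul _) ((hint 0 a b).const_mul _)
        measurableSet_Ico key
    rw [integral_const_mul, integral_const_mul] at hmono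
    have := hRdiff a b hab
    linarith
  · intro a b ha hab
    have key : ∀ x ∈ Set.Ico a b,
        p * gaussianPDFReal 0 v x ≤ (1 - p) * gaussianPDFReal 1 v x := by
      intro x hx
      refine gauss_pdf_key' σ hσ p x hp0 hp1 ?_
      have := hηstar p
      have hxa : a ≤ x := hx.1
      linarith
    have hmono : (∫ x in Set.Ico a b, p * gaussianPDFReal 0 v x)
        ≤ ∫ x in Set.Ico a b, (1 - p) * gaussianPDFReal 1 v x :=
      setIntegral_mono_on ((hint 0 a b).const_mul _) ((hint 1 a b).const_mul _)
        measurableSet_Ico key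
    rw [integral_const_mul, integral_const_mul] at hmono
    have := hRdiff a b hab
    linarith
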